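/- For every twice-differentiable function ψ : ℝ → ℂ², the square of the harmonic Lévy-Leblond Hamiltonian satisfies H_LL(H_LL ψ)(x) = −ψ″(x) + β(k/2)x² ψ(x) − i k x γ₊ ψ(x) for all x ∈ ℝ; that is, H_LL² = β·H_sch, where H_sch is the Schrödinger-like Hamiltonian (H_sch ψ)(x) = −(1/β)ψ″(x) + (k/2)x² ψ(x) − i(k/β) x γ₊ ψ(x). -/

import Mathlib

open Matrix

noncomputable section

/-- The gamma matrix `γ¹ = [[1,0],[0,−1]]`. -/
def γ1 : Matrix (Fin 2) (Fin 2) ℂ := !![1, 0; 0, -1]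

/-- The gamma matrix `γ₊ = [[0,1],[0,0]]`. -/
def γp : Matrix (Fin 2) (Fin 2) ℂ := !![0, 1; 0, 0]

/-- The gamma matrix `γ₋ = [[0,0],[1,0]]`. -/
def γm : Matrix (Fin 2) (Fin 2) ℂ := !![0, 0; 1, 0]

/-- The harmonic Lévy-Leblond Hamiltonian:
`(H_LL ψ)(x) = β γ₋ ψ(x) − i γ¹ ψ′(x) + (k/2) x² γ₊ ψ(x)`. -/
def HLL (β k : ℝ) (ψ : ℝ → (Fin 2 → ℂ)) : ℝ → (Fin 2 → ℂ) :=
  fun x => (β : ℂ) • γm.mulVec (ψ x) - Complex.I • γ1.mulVec (deriv ψ x)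
    + ((k / 2 * x ^ 2 : ℝ) : ℂ) • γp.mulVec (ψ x)

/-- The lowering operator:
`(bψ)(x) = √(βk/2)·x·ψ(x) + ψ′(x) − i√(k/(2β)) γ₊ ψ(x)`. -/
def lower (β k : ℝ) (ψ : ℝ → (Fin 2 → ℂ)) : ℝ → (Fin 2 → ℂ) :=
  fun x => ((Real.sqrt (β * k / 2) * x : ℝ) : ℂ) • ψ x + deriv ψ x
    - (Complex.I * ((Real.sqrt (k / (2 * β)) : ℝ) : ℂ)) • γp.mulVec (ψ x)

/-- The raising operator:
`(b†ψ)(x) = √(βk/2)·x·ψ(x) − ψ′(x) − i√(k/(2β)) γ₊ ψ(x)`. -/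
def raise (β k : ℝ) (ψ : ℝ → (Fin 2 → ℂ)) : ℝ → (Fin 2 → ℂ) :=
  fun x => ((Real.sqrt (β * k / 2) * x : ℝ) : ℂ) • ψ x - deriv ψ x
    - (Complex.I * ((Real.sqrt (k / (2 * β)) : ℝ) : ℂ)) • γp.mulVec (ψ x)

lemma hasDerivAt_mulVec (A : Matrix (Fin 2) (Fin 2) ℂ) {f : ℝ → Fin 2 → ℂ} {f' : Fin 2 → ℂ} {x : ℝ}
    (hf : HasDerivAt f f' x) : HasDerivAt (fun x => A.mulVec (f x)) (A.mulVec f') x := by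
  have := ((A.mulVecLin.restrictScalars ℝ).toContinuousLinearMap.hasFDerivAt
    (x := f x)).comp_hasDerivAt x hf
  simpa [Function.comp_def] using this

/-- For every twice-differentiable `ψ : ℝ → ℂ²`,
`H_LL(H_LL ψ)(x) = −ψ″(x) + β(k/2)x² ψ(x) − i k x γ₊ ψ(x)`,
i.e. `H_LL² = β·H_sch` where `H_sch` is the Schrödinger-like Hamiltonian. -/
theorem HLL_sq (β k : ℝ) (hβ : 0 < β) (hk : 0 < k)
    (ψ : ℝ → (Fin 2 → ℂ))
    (hψ1 : Differentiable ℝ ψ) (hψ2 : Differentiable ℝ (deriv ψ)) :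
    ∀ x : ℝ, HLL β k (HLL β k ψ) x
      = -(deriv (deriv ψ) x) + ((β * (k / 2) * x ^ 2 : ℝ) : ℂ) • ψ x
        - (Complex.I * ((k * x : ℝ) : ℂ)) • γp.mulVec (ψ x) := by
  intro x
  have h1 : HasDerivAt ψ (deriv ψ x) x := (hψ1 x).hasDerivAt
  have h2 : HasDerivAt (deriv ψ) (deriv (deriv ψ) x) x := (hψ2 x).hasDerivAt
  have hx : HasDerivAt (fun x : ℝ => (x : ℂ)) 1 x := by
    simpa using (hasDerivAt_id x).ofReal_comp
  have hc : HasDerivAt (fun x : ℝ => ((k / 2 * x ^ 2 : ℝ) : ℂ)) (((k * x : ℝ) : ℂ)) x := by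
    have h := (hx.mul hx).const_mul (((k / 2 : ℝ)) : ℂ)
    have : (fun x : ℝ => ((k / 2 * x ^ 2 : ℝ) : ℂ)) = fun x : ℝ => ((k / 2 : ℝ) : ℂ) * ((x:ℂ) * (x:ℂ)) := by
      funext y; push_cast; ring
    rw [this]
    refine h.congr_deriv ?_
    push_cast; ring
  have hH : HasDerivAt (HLL β k ψ)
      ((β : ℂ) • γm.mulVec (deriv ψ x) - Complex.I • γ1.mulVec (deriv (deriv ψ) x)
        + (((k / 2 * x ^ 2 : ℝ) : ℂ) • γp.mulVec (deriv ψ x) + ((k * x : ℝ) : ℂ) • γp.mulVec (ψ x))) x := by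
    exact (((hasDerivAt_mulVec γm h1).const_smul (β : ℂ)).sub
      ((hasDerivAt_mulVec γ1 h2).const_smul Complex.I)).add (hc.smul (hasDerivAt_mulVec γp h1))
  have hd := hH.deriv
  show (β : ℂ) • γm.mulVec (HLL β k ψ x) - Complex.I • γ1.mulVec (deriv (HLL β k ψ) x)
      + ((k / 2 * x ^ 2 : ℝ) : ℂ) • γp.mulVec (HLL β k ψ x) = _
  rw [hd]
  funext i
  fin_cases i <;>
    simp [HLL, γ1, γp, γm, Matrix.mulVec, dotProduct, Fin.sum_univ_two] <;>
    push_cast <;> ring_nf <;>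
    simp [Complex.I_sq, Matrix.vecHead, Matrix.vecTail] <;> ring

end
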